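/- Let 𝒢 be a groupoid and let R be an object unital 𝒢-graded ring with 1_{R_e} ≠ 0 for every object e. The following are equivalent: (i) R is an object skew groupoid ring, i.e. there exist an object crossed system (A, 𝒢, α, β) with A_e = R_e for every object e and with trivial β (β_{σ,τ} = 1_{A_{r(σ)}} for every composable pair (σ,τ)) and a bijective ring homomorphism γ : R → A ⋊^α_β 𝒢 with γ(R_σ) = (A ⋊^α_β 𝒢)_σ for every morphism σ; (ii) there exists a family (u_σ)_{σ∈𝒢} such that for every morphism σ, u_σ ∈ R_σ is object invertible, and u_σ u_τ = u_{στ} for every composable pair (σ,τ); that is, the degree map U^gr(R) → 𝒢 is surjective and splits as a homomorphism of groupoids. -/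

import Mathlib

open CategoryTheory

universe u v

/-- The type of all morphisms of a groupoid `𝒢`, bundled with their source and target. -/
abbrev Mor (𝒢 : Type u) [Groupoid 𝒢] : Type _ := Σ (e f : 𝒢), e ⟶ f

/-- A grading of a (not necessarily unital) ring `R` by a groupoid `𝒢`:
`R` is the internal direct sum of additive subgroups `grade σ`, one for each
morphism `σ`, with `R_σ R_τ ⊆ R_{στ}` for composable pairs (note that the paper's
product `στ`, requiring `d(σ) = r(τ)`, is `τ ≫ σ` in categorical notation), and
`R_σ R_τ = 0` for non-composable pairs. -/
structure GroupoidGrading (𝒢 : Type u) [Groupoid 𝒢] (R : Type v) [NonUnitalRing R] where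
  grade : ∀ ⦃e f : 𝒢⦄, (e ⟶ f) → AddSubgroup R
  decompose : ∀ r : R, ∃ (s : Finset (Mor 𝒢)) (c : Mor 𝒢 → R),
    (∀ σ : Mor 𝒢, c σ ∈ grade σ.2.2) ∧ r = ∑ σ ∈ s, c σ
  indep : ∀ (s : Finset (Mor 𝒢)) (c : Mor 𝒢 → R),
    (∀ σ : Mor 𝒢, c σ ∈ grade σ.2.2) → (∑ σ ∈ s, c σ) = 0 → ∀ σ ∈ s, c σ = 0
  mul_mem : ∀ ⦃a b c : 𝒢⦄ (σ : b ⟶ c) (τ : a ⟶ b),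
    ∀ x ∈ grade σ, ∀ y ∈ grade τ, x * y ∈ grade (τ ≫ σ)
  mul_eq_zero : ∀ ⦃a b b' c : 𝒢⦄ (σ : b ⟶ c) (τ : a ⟶ b'), b' ≠ b →
    ∀ x ∈ grade σ, ∀ y ∈ grade τ, x * y = 0

/-- Object unitality data for a groupoid graded ring: a family of local identities
`one e ∈ R_e` such that `1_{R_{r(σ)}} x = x 1_{R_{d(σ)}} = x` for every homogeneous
`x ∈ R_σ` (in particular each `R_e` is a unital ring with identity `one e`). -/
structure ObjectUnital {𝒢 : Type u} [Groupoid 𝒢] {R : Type v} [NonUnitalRing R]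
    (g : GroupoidGrading 𝒢 R) where
  one : 𝒢 → R
  one_mem : ∀ e : 𝒢, one e ∈ g.grade (𝟙 e)
  one_mul : ∀ ⦃e f : 𝒢⦄ (σ : e ⟶ f), ∀ x ∈ g.grade σ, one f * x = x
  mul_one : ∀ ⦃e f : 𝒢⦄ (σ : e ⟶ f), ∀ x ∈ g.grade σ, x * one e = x
/-- An object crossed system `(A, 𝒢, α, β)`: a family of nonzero unital rings `A e`
indexed by the objects of `𝒢`, a weak action `α` assigning to each morphism
`σ : e ⟶ f` (so `d(σ) = e`, `r(σ) = f`) a ring isomorphism `α σ : A e ≃+* A f` with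
`α (𝟙 e) = id`, and an `α`-cocycle `β` assigning to each composable pair (in the paper's
notation `β_{σ,τ}` for `d(σ) = r(τ)`, i.e. `τ : a ⟶ b`, `σ : b ⟶ c`) a unit of `A c`. -/
structure ObjectCrossedSystem (𝒢 : Type u) [Groupoid 𝒢]
    (A : 𝒢 → Type v) [∀ e, Ring (A e)] where
  nontriv : ∀ e : 𝒢, (0 : A e) ≠ 1
  α : ∀ ⦃e f : 𝒢⦄, (e ⟶ f) → (A e ≃+* A f)
  α_id : ∀ e : 𝒢, α (𝟙 e) = RingEquiv.refl (A e)
  β : ∀ ⦃a b c : 𝒢⦄, (b ⟶ c) → (a ⟶ b) → (A c)ˣ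
  β_id_right : ∀ ⦃b c : 𝒢⦄ (σ : b ⟶ c), β σ (𝟙 b) = 1
  β_id_left : ∀ ⦃b c : 𝒢⦄ (σ : b ⟶ c), β (𝟙 c) σ = 1
  α_α : ∀ ⦃a b c : 𝒢⦄ (σ : b ⟶ c) (τ : a ⟶ b) (x : A a),
    α σ (α τ x) = (β σ τ : A c) * α (τ ≫ σ) x * (((β σ τ)⁻¹ : (A c)ˣ) : A c)
  cocycle : ∀ ⦃a b c d : 𝒢⦄ (σ : c ⟶ d) (τ : b ⟶ c) (ρ : a ⟶ b),
    (β σ τ : A d) * (β (τ ≫ σ) ρ : A d) = α σ (β τ ρ : A c) * (β σ (ρ ≫ τ) : A d)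

/-- The underlying additive group of the crossed product `A ⋊^α_β 𝒢`: finitely supported
families `(a_σ)` indexed by the morphisms of `𝒢` with `a_σ ∈ A_{r(σ)}`; the element
`a u_σ` is `uElt σ a` below. -/
abbrev CrossedProd (𝒢 : Type u) [Groupoid 𝒢] (A : 𝒢 → Type v) [∀ e, AddCommGroup (A e)] :=
  Π₀ σ : Mor 𝒢, A σ.2.1

open Classical in
/-- The element `a u_σ` of the crossed product. -/
noncomputable def uElt {𝒢 : Type u} [Groupoid 𝒢] {A : 𝒢 → Type v} [∀ e, AddCommGroup (A e)]
    {e f : 𝒢} (σ : e ⟶ f) (a : A f) : CrossedProd 𝒢 A :=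
  DFinsupp.single (⟨e, f, σ⟩ : Mor 𝒢) a

/-- The element `1_{A_e} u_e` of the crossed product. -/
noncomputable def cpOne {𝒢 : Type u} [Groupoid 𝒢] (A : 𝒢 → Type v) [∀ e, Ring (A e)]
    (e : 𝒢) : CrossedProd 𝒢 A :=
  uElt (𝟙 e) (1 : A e)

open Classical in
/-- The product of the crossed product `A ⋊^α_β 𝒢`, determined biadditively by
`(a u_σ)(b u_τ) = a α_σ(b) β_{σ,τ} u_{στ}` for composable `(σ,τ)` (i.e. `d(σ) = r(τ)`;
 in categorical notation `στ = τ ≫ σ`) and `(a u_σ)(b u_τ) = 0` otherwise. -/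
noncomputable def cpMul {𝒢 : Type u} [Groupoid 𝒢] {A : 𝒢 → Type v} [∀ e, Ring (A e)]
    (S : ObjectCrossedSystem 𝒢 A) (x y : CrossedProd 𝒢 A) : CrossedProd 𝒢 A :=
  x.sum fun σ a => y.sum fun τ b =>
    if h : τ.2.1 = σ.1 then
      uElt ((τ.2.2 ≫ eqToHom h) ≫ σ.2.2)
        (a * S.α σ.2.2 (cast (congrArg A h) b) * (S.β σ.2.2 (τ.2.2 ≫ eqToHom h) : A σ.2.1))
    else 0
/-- The principal component `R_e = R_{𝟙 e}` of an object unital groupoid graded ring,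
as a type. -/
def GradePiece {𝒢 : Type u} [Groupoid 𝒢] {R : Type v} [NonUnitalRing R]
    (g : GroupoidGrading 𝒢 R) (U : ObjectUnital g) (e : 𝒢) : Type v :=
  ↥(g.grade (𝟙 e))

/-- The underlying element of `R` of an element of `R_e`. -/
def GradePiece.val {𝒢 : Type u} [Groupoid 𝒢] {R : Type v} [NonUnitalRing R]
    {g : GroupoidGrading 𝒢 R} {U : ObjectUnital g} {e : 𝒢}
    (x : GradePiece g U e) : R :=
  Subtype.val (show ↥(g.grade (𝟙 e)) from x)

/-- Each principal component `R_e` of an object unital groupoid graded ring is a unital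
ring, with multiplication inherited from `R` and identity `1_{R_e}`. -/
instance GradePiece.instRing {𝒢 : Type u} [Groupoid 𝒢] {R : Type v} [NonUnitalRing R]
    (g : GroupoidGrading 𝒢 R) (U : ObjectUnital g) (e : 𝒢) :
    Ring (GradePiece g U e) :=
  letI ac : AddCommGroup (GradePiece g U e) :=
    (inferInstance : AddCommGroup (g.grade (𝟙 e)))
  letI mul : Mul (GradePiece g U e) :=
    ⟨fun x y => ⟨GradePiece.val x * GradePiece.val y, by
      have h := g.mul_mem (𝟙 e) (𝟙 e) (GradePiece.val x)
        (show ↥(g.grade (𝟙 e)) from x).2 (GradePiece.val y)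
        (show ↥(g.grade (𝟙 e)) from y).2
      simpa using h⟩⟩
  { ac, mul with
    one := show ↥(g.grade (𝟙 e)) from ⟨U.one e, U.one_mem e⟩
    mul_assoc := fun a b c => Subtype.ext (mul_assoc (GradePiece.val a)
      (GradePiece.val b) (GradePiece.val c))
    one_mul := fun a => Subtype.ext (U.one_mul (𝟙 e) (GradePiece.val a)
      (show ↥(g.grade (𝟙 e)) from a).2)
    mul_one := fun a => Subtype.ext (U.mul_one (𝟙 e) (GradePiece.val a)
      (show ↥(g.grade (𝟙 e)) from a).2)
    left_distrib := fun a b c => Subtype.ext (left_distrib (GradePiece.val a)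
      (GradePiece.val b) (GradePiece.val c))
    right_distrib := fun a b c => Subtype.ext (right_distrib (GradePiece.val a)
      (GradePiece.val b) (GradePiece.val c))
    zero_mul := fun a => Subtype.ext (zero_mul (GradePiece.val a))
    mul_zero := fun a => Subtype.ext (mul_zero (GradePiece.val a)) }

namespace Stmt9Aux

variable {𝒢 : Type u} [Groupoid 𝒢] {R : Type v} [NonUnitalRing R]
  {g : GroupoidGrading 𝒢 R} {U : ObjectUnital g}

lemma val_mem {e : 𝒢} (x : GradePiece g U e) : x.val ∈ g.grade (𝟙 e) :=
  (show ↥(g.grade (𝟙 e)) from x).2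

lemma gp_ext {e : 𝒢} {x y : GradePiece g U e} (h : x.val = y.val) : x = y :=
  Subtype.ext h

lemma val_mul {e : 𝒢} (x y : GradePiece g U e) : (x * y).val = x.val * y.val := rfl

lemma val_one (e : 𝒢) : (1 : GradePiece g U e).val = U.one e := rfl

lemma val_zero (e : 𝒢) : (0 : GradePiece g U e).val = 0 := rfl

lemma val_add {e : 𝒢} (x y : GradePiece g U e) : (x + y).val = x.val + y.val := rfl

open Classical in
/-- The map `a u_σ ↦ a · u_σ` from the crossed product back to `R`. -/
noncomputable def delta (g : GroupoidGrading 𝒢 R) (U : ObjectUnital g)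
    (uu : ∀ ⦃e f : 𝒢⦄, (e ⟶ f) → R) :
    CrossedProd 𝒢 (GradePiece g U) →+ R :=
  DFinsupp.sumAddHom fun σ =>
  { toFun := fun a => a.val * uu σ.2.2
    map_zero' := by show (0 : GradePiece g U _).val * _ = 0; rw [val_zero, zero_mul]
    map_add' := fun a b => by show (a+b).val * _ = a.val * _ + b.val * _; rw [val_add, add_mul] }

lemma delta_uElt (uu : ∀ ⦃e f : 𝒢⦄, (e ⟶ f) → R) {e f : 𝒢} (σ : e ⟶ f)
    (a : GradePiece g U f) :
    delta g U uu (uElt σ a) = a.val * uu σ := by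
  classical
  unfold uElt delta
  exact DFinsupp.sumAddHom_single _ _ _

end Stmt9Aux
namespace Stmt9Aux2
variable {𝒢 : Type u} [Groupoid 𝒢] {A : 𝒢 → Type v} [∀ e, Ring (A e)]

lemma cpMul_uElt_uElt (S : ObjectCrossedSystem 𝒢 A) {a b c : 𝒢}
    (σ : b ⟶ c) (τ : a ⟶ b) (x : A c) (y : A b) :
    cpMul S (uElt σ x) (uElt τ y) = uElt (τ ≫ σ) (x * S.α σ y * (S.β σ τ : A c)) := by
  classical
  unfold cpMul uElt
  rw [DFinsupp.sum_single_index, DFinsupp.sum_single_index]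
  · rw [dif_pos rfl]
    simp only [eqToHom_refl, cast_eq]
    rw [Category.comp_id]
  · rw [dif_pos rfl]
    simp [eqToHom_refl, Category.comp_id, cast_eq, uElt]
  · rw [DFinsupp.sum_single_index]
    · rw [dif_pos rfl]
      simp [eqToHom_refl, Category.comp_id, cast_eq, uElt]
    · rw [dif_pos rfl]
      simp [eqToHom_refl, Category.comp_id, cast_eq, uElt]

lemma cpMul_uElt_uElt_ne (S : ObjectCrossedSystem 𝒢 A) {a b b' c : 𝒢}
    (σ : b ⟶ c) (τ : a ⟶ b') (h : b' ≠ b) (x : A c) (y : A b') :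
    cpMul S (uElt σ x) (uElt τ y) = 0 := by
  classical
  unfold cpMul uElt
  rw [DFinsupp.sum_single_index, DFinsupp.sum_single_index]
  · rw [dif_neg h]
  · rw [dif_neg h]
  · rw [DFinsupp.sum_single_index]
    · rw [dif_neg h]
    · rw [dif_neg h]

end Stmt9Aux2
namespace Stmt9Aux
section mkS
variable {𝒢 : Type u} [Groupoid 𝒢] {R : Type v} [NonUnitalRing R]
  {g : GroupoidGrading 𝒢 R} {U : ObjectUnital g}
  (uu : ∀ ⦃e f : 𝒢⦄, (e ⟶ f) → R)
  (hmem : ∀ ⦃e f : 𝒢⦄ (σ : e ⟶ f), uu σ ∈ g.grade σ)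
  (hmul : ∀ ⦃a b c : 𝒢⦄ (σ : b ⟶ c) (τ : a ⟶ b), uu σ * uu τ = uu (τ ≫ σ))
  (hone : ∀ e : 𝒢, uu (𝟙 e) = U.one e)

include hmul hone in
lemma uu_inv_right {e f : 𝒢} (σ : e ⟶ f) : uu σ * uu (Groupoid.inv σ) = U.one f := by
  rw [hmul, Groupoid.inv_comp, hone]

include hmul hone in
lemma uu_inv_left {e f : 𝒢} (σ : e ⟶ f) : uu (Groupoid.inv σ) * uu σ = U.one e := by
  rw [hmul, Groupoid.comp_inv, hone]

include hmem in
lemma conj_mem {e f : 𝒢} (σ : e ⟶ f) (x : R) (hx : x ∈ g.grade (𝟙 e)) :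
    uu σ * x * uu (Groupoid.inv σ) ∈ g.grade (𝟙 f) := by
  have h1 : uu σ * x ∈ g.grade σ := by
    have := g.mul_mem σ (𝟙 e) (uu σ) (hmem σ) x hx
    simpa using this
  have h2 := g.mul_mem σ (Groupoid.inv σ) (uu σ * x) h1 (uu (Groupoid.inv σ))
    (hmem (Groupoid.inv σ))
  simpa using h2

/-- The action `α_σ : A_{d(σ)} → A_{r(σ)}`, `a ↦ u_σ a u_{σ⁻¹}`. -/
noncomputable def mkAlpha {e f : 𝒢} (σ : e ⟶ f) :
    GradePiece g U e ≃+* GradePiece g U f where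
  toFun a := ⟨uu σ * a.val * uu (Groupoid.inv σ), conj_mem uu hmem σ a.val (val_mem a)⟩
  invFun a := ⟨uu (Groupoid.inv σ) * a.val * uu σ, by
    simpa using conj_mem uu hmem (Groupoid.inv σ) a.val (val_mem a)⟩
  left_inv a := by
    apply gp_ext
    show uu (Groupoid.inv σ) * (uu σ * a.val * uu (Groupoid.inv σ)) * uu σ = a.val
    have h2 := uu_inv_left uu hmul hone σ
    calc uu (Groupoid.inv σ) * (uu σ * a.val * uu (Groupoid.inv σ)) * uu σ
        = (uu (Groupoid.inv σ) * uu σ) * a.val * ((uu (Groupoid.inv σ)) * uu σ) := by noncomm_ring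
      _ = U.one e * a.val * U.one e := by rw [h2]
      _ = a.val := by
          rw [U.one_mul (𝟙 e) a.val (val_mem a), U.mul_one (𝟙 e) a.val (val_mem a)]
  right_inv a := by
    apply gp_ext
    show uu σ * (uu (Groupoid.inv σ) * a.val * uu σ) * uu (Groupoid.inv σ) = a.val
    have h1 := uu_inv_right uu hmul hone σ
    calc uu σ * (uu (Groupoid.inv σ) * a.val * uu σ) * uu (Groupoid.inv σ)
        = (uu σ * uu (Groupoid.inv σ)) * a.val * (uu σ * uu (Groupoid.inv σ)) := by noncomm_ring
      _ = U.one f * a.val * U.one f := by rw [h1]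
      _ = a.val := by
          rw [U.one_mul (𝟙 f) a.val (val_mem a), U.mul_one (𝟙 f) a.val (val_mem a)]
  map_add' a b := by
    apply gp_ext
    show uu σ * (a.val + b.val) * uu (Groupoid.inv σ) = _
    show _ = uu σ * a.val * uu (Groupoid.inv σ) + uu σ * b.val * uu (Groupoid.inv σ)
    rw [mul_add, add_mul]
  map_mul' a b := by
    apply gp_ext
    show uu σ * (a.val * b.val) * uu (Groupoid.inv σ)
      = (uu σ * a.val * uu (Groupoid.inv σ)) * (uu σ * b.val * uu (Groupoid.inv σ))
    have h2 := uu_inv_left uu hmul hone σ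
    have ha : a.val * U.one e = a.val := U.mul_one (𝟙 e) a.val (val_mem a)
    calc uu σ * (a.val * b.val) * uu (Groupoid.inv σ)
        = uu σ * ((a.val * U.one e) * b.val) * uu (Groupoid.inv σ) := by rw [ha]
      _ = (uu σ * a.val * uu (Groupoid.inv σ)) * (uu σ * b.val * uu (Groupoid.inv σ)) := by
          rw [← h2]; noncomm_ring

/-- The object crossed system with trivial `β` built from a multiplicative family of
object invertible homogeneous elements. -/
noncomputable def mkS (hne : ∀ e : 𝒢, U.one e ≠ 0) :
    ObjectCrossedSystem 𝒢 (GradePiece g U) where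
  nontriv e := fun h => hne e (by
    have := congrArg GradePiece.val h
    rw [val_zero, val_one] at this
    exact this.symm)
  α _ _ σ := mkAlpha uu hmem hmul hone σ
  α_id e := by
    ext a
    apply gp_ext
    show uu (𝟙 e) * a.val * uu (Groupoid.inv (𝟙 e)) = a.val
    have : Groupoid.inv (𝟙 e) = 𝟙 e := by
      simp [Groupoid.inv_eq_inv]
    rw [this, hone, U.one_mul (𝟙 e) a.val (val_mem a), U.mul_one (𝟙 e) a.val (val_mem a)]
  β _ _ _ _ _ := 1
  β_id_right := fun {b c} σ => rfl
  β_id_left := fun {b c} σ => rfl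
  α_α {a b c} σ τ x := by
    rw [inv_one]
    apply gp_ext
    rw [Units.val_one, mul_one, one_mul]
    show uu σ * (uu τ * x.val * uu (Groupoid.inv τ)) * uu (Groupoid.inv σ)
      = uu (τ ≫ σ) * x.val * uu (Groupoid.inv (τ ≫ σ))
    have hinv : Groupoid.inv (τ ≫ σ) = Groupoid.inv σ ≫ Groupoid.inv τ := by
      simp [Groupoid.inv_eq_inv]
    rw [hinv, ← hmul (Groupoid.inv τ) (Groupoid.inv σ), ← hmul σ τ]
    noncomm_ring
  cocycle := fun {a b c d} σ τ ρ => by simp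

end mkS
end Stmt9Aux
namespace Stmt9Aux
section delta
variable {𝒢 : Type u} [Groupoid 𝒢] {R : Type v} [NonUnitalRing R]
  {g : GroupoidGrading 𝒢 R} {U : ObjectUnital g}
  (uu : ∀ ⦃e f : 𝒢⦄, (e ⟶ f) → R)
  (hmem : ∀ ⦃e f : 𝒢⦄ (σ : e ⟶ f), uu σ ∈ g.grade σ)
  (hmul : ∀ ⦃a b c : 𝒢⦄ (σ : b ⟶ c) (τ : a ⟶ b), uu σ * uu τ = uu (τ ≫ σ))
  (hone : ∀ e : 𝒢, uu (𝟙 e) = U.one e)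

lemma mkAlpha_val {e f : 𝒢} (σ : e ⟶ f) (a : GradePiece g U e) :
    ((mkAlpha uu hmem hmul hone σ) a).val = uu σ * a.val * uu (Groupoid.inv σ) := rfl

include hmem in
lemma term_mem (σ : Mor 𝒢) (a : GradePiece g U σ.2.1) :
    a.val * uu σ.2.2 ∈ g.grade σ.2.2 := by
  have := g.mul_mem (𝟙 σ.2.1) σ.2.2 a.val (val_mem a) (uu σ.2.2) (hmem σ.2.2)
  simpa using this

include hmem hmul hone in
lemma delta_inj : Function.Injective (delta g U uu) := by
  classical
  rw [injective_iff_map_eq_zero]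
  intro z hz
  have hform : delta g U uu z = ∑ σ ∈ z.support, (z σ).val * uu σ.2.2 := by
    rw [delta, DFinsupp.sumAddHom_apply]
    rfl
  have hz' := g.indep z.support (fun σ => (z σ).val * uu σ.2.2)
    (fun σ => term_mem uu hmem σ (z σ)) (by rw [← hform]; exact hz)
  ext σ
  by_cases hσ : σ ∈ z.support
  · have h0 : (z σ).val * uu σ.2.2 = 0 := hz' σ hσ
    have : (z σ).val = 0 := by
      have h1 : (z σ).val * U.one σ.2.1 = (z σ).val :=
        U.mul_one (𝟙 σ.2.1) _ (val_mem (z σ))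
      calc (z σ).val = (z σ).val * U.one σ.2.1 := h1.symm
        _ = (z σ).val * (uu σ.2.2 * uu (Groupoid.inv σ.2.2)) := by
            rw [uu_inv_right uu hmul hone]
        _ = ((z σ).val * uu σ.2.2) * uu (Groupoid.inv σ.2.2) := by rw [mul_assoc]
        _ = 0 := by rw [h0, zero_mul]
    exact gp_ext this
  · exact DFinsupp.notMem_support_iff.mp hσ

include hmem in
lemma inv_term_mem {e f : 𝒢} (σ : e ⟶ f) (x : R) (hx : x ∈ g.grade σ) :
    x * uu (Groupoid.inv σ) ∈ g.grade (𝟙 f) := by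
  have := g.mul_mem σ (Groupoid.inv σ) x hx (uu (Groupoid.inv σ)) (hmem (Groupoid.inv σ))
  simpa using this

include hmem hmul hone in
lemma delta_grade {e f : 𝒢} (σ : e ⟶ f) (x : R) (hx : x ∈ g.grade σ) :
    delta g U uu (uElt σ (⟨x * uu (Groupoid.inv σ), inv_term_mem uu hmem σ x hx⟩ :
      GradePiece g U f)) = x := by
  refine (delta_uElt uu σ _).trans ?_
  show (x * uu (Groupoid.inv σ)) * uu σ = x
  rw [mul_assoc, uu_inv_left uu hmul hone, U.mul_one σ x hx]

include hmem hmul hone in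
lemma delta_surj : Function.Surjective (delta g U uu) := by
  intro r
  obtain ⟨s, c, hcmem, hsum⟩ := g.decompose r
  refine ⟨∑ σ ∈ s, uElt σ.2.2 (⟨c σ * uu (Groupoid.inv σ.2.2),
    inv_term_mem uu hmem σ.2.2 (c σ) (hcmem σ)⟩ : GradePiece g U σ.2.1), ?_⟩
  rw [map_sum, hsum]
  exact Finset.sum_congr rfl fun σ _ => delta_grade uu hmem hmul hone σ.2.2 (c σ) (hcmem σ)

include hmem hmul hone in
lemma delta_image (σ : Mor 𝒢) :
    delta g U uu '' (Set.range fun a : GradePiece g U σ.2.1 => uElt σ.2.2 a)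
      = (g.grade σ.2.2 : Set R) := by
  ext x
  constructor
  · rintro ⟨-, ⟨a, rfl⟩, rfl⟩
    rw [delta_uElt]
    exact term_mem uu hmem σ a
  · intro hx
    exact ⟨_, ⟨_, rfl⟩, delta_grade uu hmem hmul hone σ.2.2 x hx⟩

open Classical in
include hmem hmul hone in
lemma delta_term (hne : ∀ e : 𝒢, U.one e ≠ 0) (σ τ : Mor 𝒢)
    (a : GradePiece g U σ.2.1) (b : GradePiece g U τ.2.1) :
    delta g U uu (if h : τ.2.1 = σ.1 then uElt ((τ.2.2 ≫ eqToHom h) ≫ σ.2.2)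
      (a * (mkS uu hmem hmul hone hne).α σ.2.2 (cast (congrArg (GradePiece g U) h) b) *
        (((mkS uu hmem hmul hone hne).β σ.2.2 (τ.2.2 ≫ eqToHom h) : GradePiece g U σ.2.1)))
      else 0)
    = (a.val * uu σ.2.2) * (b.val * uu τ.2.2) := by
  obtain ⟨e2, f2, σ'⟩ := σ
  obtain ⟨e1, f1, τ'⟩ := τ
  dsimp only at a b ⊢
  by_cases h : f1 = e2
  · subst h
    rw [dif_pos rfl]
    have hβ : (((mkS uu hmem hmul hone hne).β σ' (τ' ≫ eqToHom rfl)) :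
        GradePiece g U f2) = 1 := rfl
    rw [hβ, mul_one]
    have hc : cast (congrArg (GradePiece g U) (rfl : f1 = f1)) b = b := rfl
    rw [hc]
    have hα : (mkS uu hmem hmul hone hne).α σ' = mkAlpha uu hmem hmul hone σ' := rfl
    rw [hα, eqToHom_refl, Category.comp_id, delta_uElt, val_mul,
      mkAlpha_val]
    have hcomp : (τ' ≫ σ') ≫ Groupoid.inv σ' = τ' := by simp
    calc a.val * (uu σ' * b.val * uu (Groupoid.inv σ')) * uu (τ' ≫ σ')
        = a.val * uu σ' * (b.val * (uu (Groupoid.inv σ') * uu (τ' ≫ σ'))) := by noncomm_ring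
      _ = a.val * uu σ' * (b.val * uu τ') := by
          rw [hmul (Groupoid.inv σ') (τ' ≫ σ'), hcomp]
      _ = (a.val * uu σ') * (b.val * uu τ') := rfl
  · rw [dif_neg h, map_zero]
    have h1 : a.val * uu σ' ∈ g.grade σ' := term_mem uu hmem ⟨e2, f2, σ'⟩ a
    have h2 : b.val * uu τ' ∈ g.grade τ' := term_mem uu hmem ⟨e1, f1, τ'⟩ b
    exact (g.mul_eq_zero σ' τ' h _ h1 _ h2).symm

include hmem hmul hone in
lemma delta_cpMul (hne : ∀ e : 𝒢, U.one e ≠ 0) (x y : CrossedProd 𝒢 (GradePiece g U)) :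
    delta g U uu (cpMul (mkS uu hmem hmul hone hne) x y)
      = delta g U uu x * delta g U uu y := by
  classical
  have hx : delta g U uu x = ∑ σ ∈ x.support, (x σ).val * uu σ.2.2 := by
    rw [delta, DFinsupp.sumAddHom_apply]; rfl
  have hy : delta g U uu y = ∑ τ ∈ y.support, (y τ).val * uu τ.2.2 := by
    rw [delta, DFinsupp.sumAddHom_apply]; rfl
  rw [hx, hy, Finset.sum_mul_sum]
  unfold cpMul
  rw [DFinsupp.sum, map_sum]
  refine Finset.sum_congr rfl fun σ _ => ?_
  rw [DFinsupp.sum, map_sum]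
  refine Finset.sum_congr rfl fun τ _ => ?_
  exact delta_term uu hmem hmul hone hne σ τ (x σ) (y τ)

end delta
end Stmt9Aux
/-- An object unital `𝒢`-graded ring `R` (with nonzero local identities)
is an object skew groupoid ring — i.e. graded isomorphic to the crossed product of an
object crossed system with `A_e = R_e` and trivial cocycle `β` — iff the degree map
`U^gr(R) → 𝒢` is surjective and splits as a homomorphism of groupoids, i.e. there is a
family `(u_σ)` of object invertible elements `u_σ ∈ R_σ` with `u_σ u_τ = u_{στ}` for all
composable pairs. -/
theorem stmt9 {𝒢 : Type u} [Groupoid 𝒢] {R : Type v} [NonUnitalRing R]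
    (g : GroupoidGrading 𝒢 R) (U : ObjectUnital g) (hne : ∀ e : 𝒢, U.one e ≠ 0) :
    (∃ (S : ObjectCrossedSystem 𝒢 (GradePiece g U)),
      (∀ ⦃a b c : 𝒢⦄ (σ : b ⟶ c) (τ : a ⟶ b), S.β σ τ = 1) ∧
      ∃ γ : R → CrossedProd 𝒢 (GradePiece g U),
        Function.Bijective γ ∧
        (∀ x y : R, γ (x + y) = γ x + γ y) ∧
        (∀ x y : R, γ (x * y) = cpMul S (γ x) (γ y)) ∧
        (∀ σ : Mor 𝒢, γ '' (g.grade σ.2.2) =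
          Set.range (fun a : GradePiece g U σ.2.1 => uElt σ.2.2 a))) ↔
    (∃ uu : ∀ ⦃e f : 𝒢⦄, (e ⟶ f) → R,
      (∀ ⦃e f : 𝒢⦄ (σ : e ⟶ f), uu σ ∈ g.grade σ ∧
        ∃ s ∈ g.grade (Groupoid.inv σ), uu σ * s = U.one f ∧ s * uu σ = U.one e) ∧
      (∀ ⦃a b c : 𝒢⦄ (σ : b ⟶ c) (τ : a ⟶ b), uu σ * uu τ = uu (τ ≫ σ))) := by
  constructor
  · rintro ⟨S, hβ, γ, hbij, hadd, hmulγ, himg⟩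
    classical
    let E : R ≃ CrossedProd 𝒢 (GradePiece g U) := Equiv.ofBijective γ hbij
    have hγE : ∀ z, γ (E.symm z) = z := fun z => E.apply_symm_apply z
    have hmemu : ∀ ⦃e f : 𝒢⦄ (σ : e ⟶ f),
        E.symm (uElt σ (1 : GradePiece g U f)) ∈ g.grade σ := by
      intro e f σ
      have hmem1 : uElt σ (1 : GradePiece g U f) ∈ γ '' (g.grade σ : Set R) := by
        rw [himg ⟨e, f, σ⟩]; exact ⟨1, rfl⟩
      obtain ⟨x, hx, hgx⟩ := hmem1
      have hx2 : E.symm (uElt σ (1 : GradePiece g U f)) = x := by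
        rw [← hgx]; exact E.symm_apply_apply x
      rw [hx2]; exact hx
    have humul : ∀ ⦃a b c : 𝒢⦄ (σ : b ⟶ c) (τ : a ⟶ b),
        E.symm (uElt σ (1 : GradePiece g U c)) * E.symm (uElt τ (1 : GradePiece g U b))
          = E.symm (uElt (τ ≫ σ) (1 : GradePiece g U c)) := by
      intro a b c σ τ
      apply hbij.1
      rw [hmulγ, hγE, hγE, hγE, Stmt9Aux2.cpMul_uElt_uElt, hβ σ τ]
      simp
    have honeu : ∀ f : 𝒢, E.symm (uElt (𝟙 f) (1 : GradePiece g U f)) = U.one f := by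
      intro f
      have h1 : γ (U.one f) ∈ Set.range (fun a : GradePiece g U f => uElt (𝟙 f) a) := by
        rw [← himg ⟨f, f, 𝟙 f⟩]
        exact ⟨U.one f, U.one_mem f, rfl⟩
      obtain ⟨a, ha⟩ := h1
      dsimp only at ha
      have h2 : U.one f * E.symm (uElt (𝟙 f) (1 : GradePiece g U f))
          = E.symm (uElt (𝟙 f) (1 : GradePiece g U f)) :=
        U.one_mul (𝟙 f) _ (hmemu (𝟙 f))
      have h3 := congrArg γ h2
      rw [hmulγ, ← ha, hγE, Stmt9Aux2.cpMul_uElt_uElt, hβ (𝟙 f) (𝟙 f),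
        Category.comp_id] at h3
      have h4 : uElt (𝟙 f) a = uElt (𝟙 f) (1 : GradePiece g U f) := by
        simpa using h3
      have h5 : a = 1 := by
        have h6 := congrArg (fun z : CrossedProd 𝒢 (GradePiece g U) =>
          z ⟨f, f, 𝟙 f⟩) h4
        simpa [uElt, DFinsupp.single_eq_same] using h6
      apply hbij.1
      rw [hγE, ← ha, h5]
    refine ⟨fun e f σ => E.symm (uElt σ (1 : GradePiece g U f)),
      fun e f σ => ⟨hmemu σ, E.symm (uElt (Groupoid.inv σ) (1 : GradePiece g U e)),
        hmemu (Groupoid.inv σ), ?_, ?_⟩, fun a b c σ τ => humul σ τ⟩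
    · rw [humul σ (Groupoid.inv σ), Groupoid.inv_comp, honeu f]
    · rw [humul (Groupoid.inv σ) σ, Groupoid.comp_inv, honeu e]
  · rintro ⟨uu, hprop, hmul⟩
    have hmem : ∀ ⦃e f : 𝒢⦄ (σ : e ⟶ f), uu σ ∈ g.grade σ := fun e f σ => (hprop σ).1
    have hone : ∀ e : 𝒢, uu (𝟙 e) = U.one e := by
      intro e
      obtain ⟨s, hs, h1, h2⟩ := (hprop (𝟙 e)).2
      have key : uu (𝟙 e) * (uu (𝟙 e) * s) = uu (𝟙 e) * s := by
        rw [← mul_assoc, hmul, Category.comp_id]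
      rw [h1] at key
      calc uu (𝟙 e) = uu (𝟙 e) * U.one e := (U.mul_one (𝟙 e) _ (hmem (𝟙 e))).symm
        _ = U.one e := key
    classical
    refine ⟨Stmt9Aux.mkS uu hmem hmul hone hne, fun a b c σ τ => rfl, ?_⟩
    have hdinj := Stmt9Aux.delta_inj uu hmem hmul hone
    have hdsurj := Stmt9Aux.delta_surj uu hmem hmul hone
    let E : CrossedProd 𝒢 (GradePiece g U) ≃ R :=
      Equiv.ofBijective (Stmt9Aux.delta g U uu) ⟨hdinj, hdsurj⟩
    have hED : ∀ z, Stmt9Aux.delta g U uu (E.symm z) = z := fun z => E.apply_symm_apply z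
    refine ⟨E.symm, E.symm.bijective, ?_, ?_, ?_⟩
    · intro x y
      apply hdinj
      rw [hED, map_add, hED, hED]
    · intro x y
      apply hdinj
      rw [hED, Stmt9Aux.delta_cpMul uu hmem hmul hone hne, hED, hED]
    · intro σ
      rw [← Stmt9Aux.delta_image uu hmem hmul hone σ, ← Set.image_comp]
      have hfun : (⇑E.symm ∘ ⇑(Stmt9Aux.delta g U uu)) = id :=
        funext fun z => E.symm_apply_apply z
      rw [hfun, Set.image_id]
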